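/- For s ≥ 0, let h^s denote the set of sequences u : ℕ → ℂ with Σ_{n∈ℕ} (1+n)^{2s}|u_n|² < ∞, which is a Hilbert space with norm ‖u‖_{h^s} = (Σ_n (1+n)^{2s}|u_n|²)^{1/2}. Then for every σ ≥ 0, the set h̃^σ = h^σ \ ⋃_{s>σ} h^s, consisting of those u ∈ h^σ that belong to no h^s with s > σ, is a dense G_δ (comeager) subset of the Hilbert space h^σ. -/

import Mathlib

open MeasureTheory ENNReal

/-- The weighted counting measure on `ℕ` realizing the Sobolev sequence space `h^s` as
`L²(ℕ, hMeasure s)`: the point `n` carries mass `(1+n)^{2s}`. -/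
noncomputable def hMeasure (s : ℝ) : Measure ℕ :=
  Measure.sum fun n : ℕ => ((1 + (n : ℝ≥0∞)) ^ (2 * s)) • (Measure.dirac n : Measure ℕ)

lemma lintegral_hMeasure (s : ℝ) (g : ℕ → ℝ≥0∞) :
    ∫⁻ n, g n ∂(hMeasure s) = ∑' n : ℕ, (1 + (n : ℝ≥0∞)) ^ (2 * s) * g n := by
  simp [hMeasure, lintegral_sum_measure, lintegral_smul_measure, lintegral_dirac]

lemma hMeasure_singleton (s : ℝ) (n : ℕ) :
    hMeasure s {n} = (1 + (n : ℝ≥0∞)) ^ (2 * s) := by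
  rw [hMeasure, Measure.sum_apply _ (measurableSet_singleton n)]
  rw [tsum_eq_single n]
  · simp [Measure.dirac_apply' _ (measurableSet_singleton n)]
  · intro m hm
    simp [Measure.dirac_apply' _ (measurableSet_singleton n), Set.indicator,
      hm]

lemma hMeasure_singleton_pos (s : ℝ) (n : ℕ) : 0 < hMeasure s {n} := by
  rw [hMeasure_singleton]
  exact ENNReal.rpow_pos (by exact lt_of_lt_of_le one_pos le_self_add) (by simp)

lemma hMeasure_singleton_ne_top (s : ℝ) (hs : 0 ≤ s) (n : ℕ) : hMeasure s {n} ≠ ⊤ := by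
  rw [hMeasure_singleton]
  exact ENNReal.rpow_ne_top_of_nonneg (by positivity) (by simp)

lemma eq_of_ae_eq {s : ℝ} {f g : ℕ → ℂ} (h : f =ᵐ[hMeasure s] g) (n : ℕ) : f n = g n := by
  by_contra hne
  have h1 : hMeasure s {m | f m ≠ g m} = 0 := h
  have h2 : hMeasure s {n} ≤ hMeasure s {m | f m ≠ g m} :=
    measure_mono (by intro m hm; simp_all)
  have h3 := hMeasure_singleton_pos s n
  rw [h1] at h2
  exact absurd (le_antisymm h2 zero_le) (ne_of_gt h3)

section LpLemmas
variable {σ : ℝ}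

lemma coeFn_add_pt (f g : Lp ℂ 2 (hMeasure σ)) (n : ℕ) : (f + g : Lp ℂ 2 (hMeasure σ)) n = f n + g n :=
  eq_of_ae_eq (Lp.coeFn_add f g) n

lemma coeFn_sub_pt (f g : Lp ℂ 2 (hMeasure σ)) (n : ℕ) : (f - g : Lp ℂ 2 (hMeasure σ)) n = f n - g n :=
  eq_of_ae_eq (Lp.coeFn_sub f g) n

lemma lint_eq (f : Lp ℂ 2 (hMeasure σ)) :
    (∫⁻ n, (‖f n‖₊ : ℝ≥0∞) ^ (2:ℝ) ∂(hMeasure σ))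
      = ∑' n : ℕ, (1 + (n : ℝ≥0∞)) ^ (2 * σ) * (‖f n‖₊ : ℝ≥0∞) ^ (2:ℝ) :=
  lintegral_hMeasure σ _

lemma lint_ne_top (f : Lp ℂ 2 (hMeasure σ)) :
    (∑' n : ℕ, (1 + (n : ℝ≥0∞)) ^ (2 * σ) * (‖f n‖₊ : ℝ≥0∞) ^ (2:ℝ)) ≠ ⊤ := by
  rw [← lint_eq]
  have h := Lp.eLpNorm_lt_top f
  rw [eLpNorm_eq_lintegral_rpow_enorm_toReal (by norm_num) (by norm_num)] at h
  simp only [enorm_eq_nnnorm] at h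
  have h2 : (ENNReal.toReal 2) = (2:ℝ) := by norm_num
  rw [h2] at h
  intro htop
  rw [htop] at h
  norm_num at h

lemma norm_sq_eq (f : Lp ℂ 2 (hMeasure σ)) :
    ‖f‖ ^ 2 = (∑' n : ℕ, (1 + (n : ℝ≥0∞)) ^ (2 * σ) * (‖f n‖₊ : ℝ≥0∞) ^ (2:ℝ)).toReal := by
  rw [Lp.norm_def, eLpNorm_eq_lintegral_rpow_enorm_toReal (by norm_num) (by norm_num)]
  simp only [enorm_eq_nnnorm]
  have h2 : (ENNReal.toReal 2) = (2:ℝ) := by norm_num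
  rw [h2, lint_eq f]
  set I := ∑' n : ℕ, (1 + (n : ℝ≥0∞)) ^ (2 * σ) * (‖f n‖₊ : ℝ≥0∞) ^ (2:ℝ)
  rw [← ENNReal.toReal_rpow]
  rw [← Real.rpow_natCast (I.toReal ^ (1/(2:ℝ))) 2, ← Real.rpow_mul ENNReal.toReal_nonneg]
  norm_num

lemma term_toReal (f : Lp ℂ 2 (hMeasure σ)) (n : ℕ) :
    ((1 + (n : ℝ≥0∞)) ^ (2 * σ) * (‖f n‖₊ : ℝ≥0∞) ^ (2:ℝ)).toReal
      = (1 + (n : ℝ)) ^ (2 * σ) * ‖f n‖ ^ 2 := by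
  rw [ENNReal.toReal_mul, ← ENNReal.toReal_rpow, ← ENNReal.toReal_rpow]
  have h1 : ((1 : ℝ≥0∞) + n).toReal = 1 + (n:ℝ) := by
    rw [ENNReal.toReal_add (by norm_num) (by simp)]; simp
  rw [h1]
  rw [ENNReal.coe_toReal, coe_nnnorm, ← Real.rpow_natCast ‖(f : ℕ → ℂ) n‖ 2]
  norm_num

lemma summable_weights (f : Lp ℂ 2 (hMeasure σ)) :
    Summable fun n : ℕ => (1 + (n : ℝ)) ^ (2 * σ) * ‖f n‖ ^ 2 := by
  have h := ENNReal.summable_toReal (lint_ne_top f)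
  convert h using 2 with n
  exact (term_toReal f n).symm

lemma term_le_norm_sq (f : Lp ℂ 2 (hMeasure σ)) (n : ℕ) :
    (1 + (n : ℝ)) ^ (2 * σ) * ‖f n‖ ^ 2 ≤ ‖f‖ ^ 2 := by
  rw [norm_sq_eq f, ← term_toReal f n]
  exact ENNReal.toReal_mono (lint_ne_top f) (ENNReal.le_tsum n)

lemma rpow_two_mul (x : ℝ) (hx : 0 ≤ x) (t : ℝ) : x ^ (2*t) = (x ^ t) ^ (2:ℕ) := by
  rw [← Real.rpow_natCast (x ^ t) 2, ← Real.rpow_mul hx]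
  norm_num
  ring_nf

lemma eval_dist_bound (f g : Lp ℂ 2 (hMeasure σ)) (n : ℕ) :
    ‖f n - g n‖ ≤ ((1 + (n:ℝ)) ^ σ)⁻¹ * ‖f - g‖ := by
  have hb : (0:ℝ) < 1 + (n:ℝ) := by positivity
  set a : ℝ := (1 + (n:ℝ)) ^ σ with ha
  have hap : 0 < a := Real.rpow_pos_of_pos hb σ
  have h := term_le_norm_sq (f - g) n
  rw [coeFn_sub_pt f g n, rpow_two_mul _ hb.le σ, ← ha] at h
  have hx : 0 ≤ ‖f n - g n‖ := norm_nonneg _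
  have hy : 0 ≤ ‖f - g‖ := norm_nonneg _
  have h2 : (a * ‖f n - g n‖) ^ (2:ℕ) ≤ ‖f - g‖ ^ (2:ℕ) := by nlinarith [h]
  have h3 : a * ‖f n - g n‖ ≤ ‖f - g‖ :=
    (pow_le_pow_iff_left₀ (by positivity) hy (by norm_num)).mp h2
  calc ‖f n - g n‖ = a⁻¹ * (a * ‖f n - g n‖) := by field_simp
  _ ≤ a⁻¹ * ‖f - g‖ := by
      exact mul_le_mul_of_nonneg_left h3 (by positivity)

lemma continuous_eval (n : ℕ) :
    Continuous (fun f : Lp ℂ 2 (hMeasure σ) => f n) := by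
  apply LipschitzWith.continuous (K := Real.toNNReal (((1 + (n:ℝ)) ^ σ)⁻¹))
  apply LipschitzWith.of_dist_le_mul
  intro f g
  rw [dist_eq_norm, dist_eq_norm, ← coeFn_sub_pt f g n, Real.coe_toNNReal _ (by positivity)]
  rw [coeFn_sub_pt f g n]
  exact eval_dist_bound f g n

noncomputable def CSet (σ : ℝ) (j M : ℕ) : Set (Lp ℂ 2 (hMeasure σ)) :=
  {f | ∀ N : ℕ, ∑ n ∈ Finset.range N,
      (1 + (n:ℝ)) ^ (2 * (σ + 1/(j+1))) * ‖f n‖ ^ 2 ≤ (M:ℝ)}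

lemma isClosed_CSet (σ : ℝ) (j M : ℕ) : IsClosed (CSet σ j M) := by
  have : CSet σ j M = ⋂ N : ℕ,
      (fun f : Lp ℂ 2 (hMeasure σ) => ∑ n ∈ Finset.range N,
        (1 + (n:ℝ)) ^ (2 * (σ + 1/(j+1))) * ‖f n‖ ^ 2) ⁻¹' (Set.Iic (M:ℝ)) := by
    ext f; simp [CSet, Set.mem_iInter]
  rw [this]
  refine isClosed_iInter fun N => IsClosed.preimage ?_ isClosed_Iic
  exact continuous_finset_sum _ fun n _ =>
    (continuous_const.mul (((continuous_eval n).norm).pow 2))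

lemma toReal_one_add (n : ℕ) : ((1 : ℝ≥0∞) + n).toReal = 1 + (n:ℝ) := by
  rw [ENNReal.toReal_add (by norm_num) (by simp)]; simp

lemma dense_compl_CSet (σ : ℝ) (hσ : 0 ≤ σ) (j M : ℕ) : Dense (CSet σ j M)ᶜ := by
  rw [Metric.dense_iff]
  intro f r hr
  set s : ℝ := σ + 1/(j+1) with hs_def
  have hs : σ < s := by
    rw [hs_def]
    have : (0:ℝ) < 1/(j+1) := by positivity
    linarith
  -- choose n
  have hterm : Filter.Tendsto (fun n : ℕ => (1 + (n:ℝ)) ^ (2*σ) * ‖f n‖ ^ 2)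
      Filter.atTop (nhds 0) := (summable_weights f).tendsto_atTop_zero
  have h1 : ∀ᶠ n : ℕ in Filter.atTop,
      (1 + (n:ℝ)) ^ (2*σ) * ‖f n‖ ^ 2 < (r/4)^2 := by
    have hpos : (0:ℝ) < (r/4)^2 := by positivity
    exact hterm.eventually_lt_const hpos
  have hgrow : Filter.Tendsto (fun n : ℕ => (1 + (n:ℝ)) ^ (2*(s-σ)) * (r/4)^2)
      Filter.atTop Filter.atTop := by
    apply Filter.Tendsto.atTop_mul_const (by positivity)
    have hb : Filter.Tendsto (fun n : ℕ => 1 + (n:ℝ)) Filter.atTop Filter.atTop :=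
      Filter.tendsto_atTop_add_const_left _ 1 tendsto_natCast_atTop_atTop
    have hexp : (0:ℝ) < 2*(s-σ) := by linarith
    exact (tendsto_rpow_atTop hexp).comp hb
  have h2 : ∀ᶠ n : ℕ in Filter.atTop,
      (M:ℝ) < (1 + (n:ℝ)) ^ (2*(s-σ)) * (r/4)^2 := hgrow.eventually_gt_atTop M
  obtain ⟨n, hn1, hn2⟩ := (h1.and h2).exists
  have hb : (0:ℝ) < 1 + (n:ℝ) := by positivity
  set a : ℝ := (1 + (n:ℝ)) ^ σ with ha_def
  have hap : 0 < a := Real.rpow_pos_of_pos hb σ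
  set c : ℝ := (r/2) * a⁻¹ with hc_def
  set h : Lp ℂ 2 (hMeasure σ) :=
    indicatorConstLp 2 (measurableSet_singleton n) (hMeasure_singleton_ne_top σ hσ n) ((c:ℂ))
    with hh_def
  have hnorm_h : ‖h‖ = r/2 := by
    rw [hh_def, norm_indicatorConstLp (by norm_num) (by norm_num)]
    have ht2 : (2:ℝ≥0∞).toReal = (2:ℝ) := by norm_num
    rw [ht2, measureReal_def, hMeasure_singleton, ← ENNReal.toReal_rpow, toReal_one_add,
      ← Real.rpow_mul hb.le]
    have : (2*σ) * (1/2) = σ := by ring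
    rw [this, Complex.norm_real, Real.norm_of_nonneg (by positivity)]
    rw [hc_def, ← ha_def]
    field_simp
  set g : Lp ℂ 2 (hMeasure σ) := f + h with hg_def
  have hgval : g n = f n + (c:ℂ) := by
    rw [hg_def, coeFn_add_pt f h n]
    congr 1
    have := eq_of_ae_eq (indicatorConstLp_coeFn (p := 2) (μ := hMeasure σ)
      (hs := measurableSet_singleton n) (hμs := hMeasure_singleton_ne_top σ hσ n)
      (c := (c:ℂ))) n
    rw [this]
    simp
  refine ⟨g, ?_, ?_⟩
  · rw [Metric.mem_ball, dist_eq_norm, hg_def, add_sub_cancel_left, hnorm_h]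
    linarith
  · -- g ∉ CSet
    intro hmem
    have hsum := hmem (n+1)
    -- lower bound for ‖g n‖
    have hfn : ‖f n‖ ≤ (r/4) * a⁻¹ := by
      have hsq : (a * ‖f n‖)^(2:ℕ) ≤ (r/4)^(2:ℕ) := by
        rw [rpow_two_mul _ hb.le σ, ← ha_def] at hn1
        nlinarith [hn1]
      have := (pow_le_pow_iff_left₀ (by positivity) (by positivity : (0:ℝ) ≤ r/4)
        (by norm_num)).mp hsq
      calc ‖f n‖ = a⁻¹ * (a * ‖f n‖) := by field_simp
      _ ≤ a⁻¹ * (r/4) := mul_le_mul_of_nonneg_left this (by positivity)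
      _ = (r/4) * a⁻¹ := by ring
    have hgn : (r/4) * a⁻¹ ≤ ‖g n‖ := by
      have h4 : ‖(c:ℂ)‖ = c := by
        rw [Complex.norm_real, Real.norm_of_nonneg (by positivity)]
      have h5 : ‖(c:ℂ)‖ - ‖f n‖ ≤ ‖g n‖ := by
        rw [hgval]
        have := norm_sub_le (f n + (c:ℂ)) (f n)
        simp only [add_sub_cancel_left] at this
        linarith [this]
      rw [h4, hc_def] at h5
      have : (r/4) * a⁻¹ ≤ (r/2) * a⁻¹ - ‖f n‖ := by
        have : ‖f n‖ ≤ (r/4) * a⁻¹ := hfn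
        have h7 : (0:ℝ) ≤ a⁻¹ := by positivity
        nlinarith
      linarith
    -- lower bound for the sum
    have hterm_ge : (1 + (n:ℝ)) ^ (2*s) * ‖g n‖ ^ 2
        ≤ ∑ m ∈ Finset.range (n+1), (1 + (m:ℝ)) ^ (2 * s) * ‖g m‖ ^ 2 := by
      apply Finset.single_le_sum (f := fun m : ℕ => (1 + (m:ℝ)) ^ (2 * s) * ‖g m‖ ^ 2)
      · intro m _; positivity
      · exact Finset.self_mem_range_succ n
    have hkey : (1 + (n:ℝ)) ^ (2*s) * (a⁻¹)^(2:ℕ) = (1 + (n:ℝ)) ^ (2*(s-σ)) := by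
      rw [ha_def, inv_pow, ← Real.rpow_natCast ((1 + (n:ℝ)) ^ σ) 2, ← Real.rpow_mul hb.le,
        ← Real.rpow_neg hb.le, ← Real.rpow_add hb]
      congr 1
      ring
    have hgsq : ((r/4) * a⁻¹)^(2:ℕ) ≤ ‖g n‖^(2:ℕ) :=
      pow_le_pow_left₀ (by positivity) hgn 2
    have hA : (0:ℝ) < (1 + (n:ℝ)) ^ (2*s) := Real.rpow_pos_of_pos hb _
    have hfinal : (M:ℝ) < (1 + (n:ℝ)) ^ (2*s) * ‖g n‖ ^ 2 := by
      calc (M:ℝ) < (1 + (n:ℝ)) ^ (2*(s-σ)) * (r/4)^2 := hn2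
      _ = (1 + (n:ℝ)) ^ (2*s) * (((r/4) * a⁻¹)^(2:ℕ)) := by
          rw [← hkey]; ring
      _ ≤ (1 + (n:ℝ)) ^ (2*s) * ‖g n‖ ^ 2 :=
          mul_le_mul_of_nonneg_left hgsq hA.le
    have : (M:ℝ) < ∑ m ∈ Finset.range (n+1), (1 + (m:ℝ)) ^ (2 * s) * ‖g m‖ ^ 2 :=
      lt_of_lt_of_le hfinal hterm_ge
    rw [hs_def] at this
    linarith [hsum]

end LpLemmas

lemma set_eq (σ : ℝ) :
    {f : Lp ℂ 2 (hMeasure σ) |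
        ∀ s : ℝ, σ < s → ¬ Summable fun n : ℕ => (1 + (n : ℝ)) ^ (2 * s) * ‖f n‖ ^ 2}
      = ⋂ j : ℕ, ⋂ M : ℕ, (CSet σ j M)ᶜ := by
  ext f
  simp only [Set.mem_setOf_eq, Set.mem_iInter, Set.mem_compl_iff]
  constructor
  · intro hf j M hmem
    have hs : σ < σ + 1/(j+1) := by
      have : (0:ℝ) < 1/(j+1) := by positivity
      linarith
    refine hf _ hs ?_
    exact summable_of_sum_range_le (fun n => by positivity) hmem
  · intro hf s hs hsum
    obtain ⟨j, hj⟩ := exists_nat_one_div_lt (show (0:ℝ) < s - σ by linarith)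
    have hsj : σ + 1/(j+1) ≤ s := by linarith
    have hsum' : Summable fun n : ℕ => (1 + (n:ℝ)) ^ (2 * (σ + 1/(j+1))) * ‖f n‖ ^ 2 := by
      refine Summable.of_nonneg_of_le (fun n => by positivity) (fun n => ?_) hsum
      have h1 : (1:ℝ) ≤ 1 + (n:ℝ) := by simp
      exact mul_le_mul_of_nonneg_right
        (Real.rpow_le_rpow_of_exponent_le h1 (by linarith)) (by positivity)
    set M : ℕ := ⌈∑' n : ℕ, (1 + (n:ℝ)) ^ (2 * (σ + 1/(j+1))) * ‖f n‖ ^ 2⌉₊ with hM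
    refine hf j M fun N => ?_
    calc ∑ n ∈ Finset.range N, (1 + (n:ℝ)) ^ (2 * (σ + 1/(j+1))) * ‖f n‖ ^ 2
        ≤ ∑' n : ℕ, (1 + (n:ℝ)) ^ (2 * (σ + 1/(j+1))) * ‖f n‖ ^ 2 :=
          Summable.sum_le_tsum _ (fun n _ => by positivity) hsum'
    _ ≤ (M:ℝ) := Nat.le_ceil _

/-- In the Hilbert space `h^σ` (realized as `L²` of the weighted counting
measure with weights `(1+n)^{2σ}`), the set `h̃^σ` of elements belonging to no `h^s` with
`s > σ` is a dense `G_δ` (comeager) subset. -/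
theorem stmt16 (σ : ℝ) (hσ : 0 ≤ σ) :
    Dense {f : Lp ℂ 2 (hMeasure σ) |
        ∀ s : ℝ, σ < s → ¬ Summable fun n : ℕ => (1 + (n : ℝ)) ^ (2 * s) * ‖f n‖ ^ 2} ∧
      IsGδ {f : Lp ℂ 2 (hMeasure σ) |
        ∀ s : ℝ, σ < s → ¬ Summable fun n : ℕ => (1 + (n : ℝ)) ^ (2 * s) * ‖f n‖ ^ 2} := by
  rw [set_eq σ]
  have hopen : ∀ j M : ℕ, IsOpen ((CSet σ j M)ᶜ) := fun j M =>
    (isClosed_CSet σ j M).isOpen_compl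
  constructor
  · apply dense_of_mem_residual
    refine (countable_iInter_mem).mpr fun j => (countable_iInter_mem).mpr fun M => ?_
    exact residual_of_dense_open (hopen j M) (dense_compl_CSet σ hσ j M)
  · exact IsGδ.iInter fun j => IsGδ.iInter fun M => (hopen j M).isGδ
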